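/- arXiv:2402.01257 — 3 statements merged into one kernel-verified Lean document; each statement's English description precedes it below -/
import Mathlib

section
/- Let ζ_i be a unit complex number and ζ_j (j ≠ i, 0 ≤ j < d) unit vectors with |ζ_i^⊥·ζ_j| > 0 for all j. Along a line of normal ζ_i, the number of points z + x ζ_i^⊥, x ∈ [0,α], lying on any of the grids G(ζ_j, γ_j), divided by α, converges as α → +∞ to the sum over j ≠ i of |ζ_i^⊥·ζ_j|. -/
open Set Filter

noncomputable section

/-- Scalar product on `ℂ ≅ ℝ²`: `z·w := Re(z * conj w)`. -/
def dotp (z w : ℂ) : ℝ := (z * (starRingEnd ℂ) w).re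

/-- Orthogonal vector: `ζ^⊥ := iζ`. -/
def perp (ζ : ℂ) : ℂ := Complex.I * ζ

/-- `z` lies on the grid `G(ζᵢ, γᵢ)`. -/
def onGrid {d : ℕ} (ζ : Fin d → ℂ) (γ : Fin d → ℝ) (i : Fin d) (z : ℂ) : Prop :=
  ∃ m : ℤ, dotp z (ζ i) - γ i = m

/-- The multigrid is regular: no point lies on three distinct grid lines
(equivalently, on grids of three distinct directions). -/
def Regular {d : ℕ} (ζ : Fin d → ℂ) (γ : Fin d → ℝ) : Prop :=
  ∀ z : ℂ, Set.ncard {i : Fin d | onGrid ζ γ i z} ≤ 2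

-- counting points of an arithmetic progression in [0, α], case c > 0
lemma count_pos (c b α : ℝ) (hc : 0 < c) (hα : 0 ≤ α) :
    {x : ℝ | x ∈ Icc 0 α ∧ ∃ m : ℤ, c * x + b = m}.Finite ∧
    |({x : ℝ | x ∈ Icc 0 α ∧ ∃ m : ℤ, c * x + b = m}.ncard : ℝ) - c * α| ≤ 1 := by
  have hset : {x : ℝ | x ∈ Icc 0 α ∧ ∃ m : ℤ, c * x + b = m}
      = (fun m : ℤ => ((m : ℝ) - b) / c) '' ↑(Finset.Icc ⌈b⌉ ⌊c * α + b⌋) := by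
    ext x
    simp only [mem_setOf_eq, mem_Icc, Set.mem_image, Finset.coe_Icc, Set.mem_Icc,
      Finset.mem_coe, Finset.mem_Icc]
    constructor
    · rintro ⟨⟨h0, h1⟩, m, hm⟩
      refine ⟨m, ⟨Int.ceil_le.2 (by nlinarith), Int.le_floor.2 (by nlinarith)⟩, ?_⟩
      field_simp
      linarith
    · rintro ⟨m, ⟨hm1, hm2⟩, rfl⟩
      have hm1' : b ≤ (m : ℝ) := le_trans (Int.le_ceil b) (by exact_mod_cast hm1)
      have hm2' : (m : ℝ) ≤ c * α + b := le_trans (by exact_mod_cast hm2) (Int.floor_le _)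
      refine ⟨⟨div_nonneg (by linarith) hc.le, ?_⟩, m, by field_simp; ring⟩
      rw [div_le_iff₀ hc]; linarith
  have hinj : Function.Injective (fun m : ℤ => ((m : ℝ) - b) / c) := by
    intro m n h
    simp only at h
    field_simp at h
    exact_mod_cast (sub_left_inj.mp h)
  have hfin : {x : ℝ | x ∈ Icc 0 α ∧ ∃ m : ℤ, c * x + b = m}.Finite := by
    rw [hset]; exact (Finset.Icc _ _).finite_toSet.image _
  refine ⟨hfin, ?_⟩
  have hcard : {x : ℝ | x ∈ Icc 0 α ∧ ∃ m : ℤ, c * x + b = m}.ncard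
      = (⌊c * α + b⌋ + 1 - ⌈b⌉).toNat := by
    rw [hset, Set.ncard_image_of_injective _ hinj, Set.ncard_coe_finset, Int.card_Icc]
  have hnn : 0 ≤ ⌊c * α + b⌋ + 1 - ⌈b⌉ := by
    have : ⌈b⌉ ≤ ⌊c * α + b⌋ + 1 := le_trans (Int.ceil_le_ceil (by nlinarith))
      (Int.ceil_le_floor_add_one _)
    omega
  rw [hcard]
  have hcast : ((⌊c * α + b⌋ + 1 - ⌈b⌉).toNat : ℝ) = ((⌊c * α + b⌋ : ℝ) + 1 - ⌈b⌉) := by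
    have h := Int.toNat_of_nonneg hnn
    have h' : (((⌊c * α + b⌋ + 1 - ⌈b⌉).toNat : ℤ) : ℝ) = ((⌊c * α + b⌋ : ℝ) + 1 - ⌈b⌉) := by
      rw [h]; push_cast; ring
    exact_mod_cast h'
  rw [hcast, abs_le]
  have h1 := Int.floor_le (c * α + b)
  have h2 := Int.lt_floor_add_one (c * α + b)
  have h3 := Int.le_ceil b
  have h4 := Int.ceil_lt_add_one b
  constructor <;> linarith

lemma count_ne (c b α : ℝ) (hc : c ≠ 0) (hα : 0 ≤ α) :
    {x : ℝ | x ∈ Icc 0 α ∧ ∃ m : ℤ, c * x + b = m}.Finite ∧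
    |({x : ℝ | x ∈ Icc 0 α ∧ ∃ m : ℤ, c * x + b = m}.ncard : ℝ) - |c| * α| ≤ 1 := by
  rcases lt_or_gt_of_ne hc with h | h
  · have hswap : {x : ℝ | x ∈ Icc 0 α ∧ ∃ m : ℤ, c * x + b = m}
        = {x : ℝ | x ∈ Icc 0 α ∧ ∃ m : ℤ, (-c) * x + (-b) = m} := by
      ext x
      refine and_congr_right fun _ => ⟨fun ⟨m, hm⟩ => ⟨-m, ?_⟩, fun ⟨m, hm⟩ => ⟨-m, ?_⟩⟩
      · push_cast; linarith
      · push_cast at hm ⊢; linarith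
    rw [hswap, abs_of_neg h]
    exact count_pos (-c) (-b) α (by linarith) hα
  · rw [abs_of_pos h]; exact count_pos c b α h hα

lemma tendsto_count (c b : ℝ) (hc : c ≠ 0) :
    Tendsto (fun α : ℝ =>
      ({x : ℝ | x ∈ Icc 0 α ∧ ∃ m : ℤ, c * x + b = m}.ncard : ℝ) / α) atTop (nhds |c|) := by
  have h0 : Tendsto (fun α : ℝ => (1:ℝ) / α) atTop (nhds 0) := by
    simpa [one_div] using tendsto_inv_atTop_zero
  have hlo : Tendsto (fun α : ℝ => |c| - 1 / α) atTop (nhds |c|) := by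
    simpa using tendsto_const_nhds.sub h0
  have hhi : Tendsto (fun α : ℝ => |c| + 1 / α) atTop (nhds |c|) := by
    simpa using tendsto_const_nhds.add h0
  refine tendsto_of_tendsto_of_tendsto_of_le_of_le' hlo hhi ?_ ?_
  · filter_upwards [eventually_ge_atTop 1] with α hα
    have hαpos : (0:ℝ) < α := by linarith
    have hb := (abs_le.1 (count_ne c b α hc hαpos.le).2)
    rw [le_div_iff₀ hαpos]
    have : (|c| - 1 / α) * α = |c| * α - 1 := by field_simp
    rw [this]; linarith [hb.1]
  · filter_upwards [eventually_ge_atTop 1] with α hα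
    have hαpos : (0:ℝ) < α := by linarith
    have hb := (abs_le.1 (count_ne c b α hc hαpos.le).2)
    rw [div_le_iff₀ hαpos]
    have : (|c| + 1 / α) * α = |c| * α + 1 := by field_simp
    rw [this]; linarith [hb.2]

lemma my_ncard_biUnion {ι β : Type*} (s : Finset ι) (A : ι → Set β)
    (hfin : ∀ j ∈ s, (A j).Finite)
    (hdisj : ∀ j ∈ s, ∀ k ∈ s, j ≠ k → Disjoint (A j) (A k)) :
    (⋃ j ∈ s, A j).ncard = ∑ j ∈ s, (A j).ncard := by
  classical
  induction s using Finset.induction with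
  | empty => simp
  | @insert a s' hj ih =>
    rw [Finset.set_biUnion_insert, Finset.sum_insert hj]
    have hAfin : (A a).Finite := hfin a (Finset.mem_insert_self a s')
    have hUfin : (⋃ j ∈ s', A j).Finite :=
      Set.Finite.biUnion s'.finite_toSet (fun j hjs => hfin j (Finset.mem_insert_of_mem hjs))
    have hdis : Disjoint (A a) (⋃ j ∈ s', A j) := by
      rw [Set.disjoint_iUnion_right]
      intro j
      rw [Set.disjoint_iUnion_right]
      intro hjs
      exact hdisj a (Finset.mem_insert_self a s') j (Finset.mem_insert_of_mem hjs)
        (fun h => hj (h ▸ hjs))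
    rw [Set.ncard_union_eq hdis hAfin hUfin,
      ih (fun j hjs => hfin j (Finset.mem_insert_of_mem hjs))
        (fun j hjs k hks => hdisj j (Finset.mem_insert_of_mem hjs) k (Finset.mem_insert_of_mem hks))]

lemma dotp_add_smul (z w ζ : ℂ) (x : ℝ) :
    dotp (z + x • w) ζ = dotp z ζ + x * dotp w ζ := by
  simp [dotp, add_mul, Complex.add_re, Complex.real_smul, Complex.mul_re, Complex.mul_im]
  ring

lemma perp_dotp_self (ζ : ℂ) : dotp (perp ζ) ζ = 0 := by
  simp [dotp, perp, Complex.mul_re, Complex.mul_im, Complex.I_re, Complex.I_im]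
  ring

/-- Along a line of unit normal `ζᵢ`, the number of points `z + x ζᵢ^⊥`, `x ∈ [0,α]`,
lying on any of the grids `G(ζⱼ, γⱼ)` (`j ≠ i`), divided by `α`, tends as `α → ∞`
to `∑_{j ≠ i} |ζᵢ^⊥·ζⱼ|`. -/
theorem crossings_density (d : ℕ) (ζ : Fin d → ℂ) (γ : Fin d → ℝ) (i : Fin d) (z : ℂ)
    (hunit : ∀ j, ‖ζ j‖ = 1)
    (hpos : ∀ j, j ≠ i → 0 < |dotp (perp (ζ i)) (ζ j)|)
    (hreg : Regular ζ γ)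
    (hz : onGrid ζ γ i z) :
    Tendsto
      (fun α : ℝ =>
        (Set.ncard {x : ℝ | x ∈ Icc 0 α ∧
            ∃ j, j ≠ i ∧ onGrid ζ γ j (z + x • perp (ζ i))} : ℝ) / α)
      atTop (nhds (∑ j ∈ Finset.univ.erase i, |dotp (perp (ζ i)) (ζ j)|)) := by
  classical
  set c : Fin d → ℝ := fun j => dotp (perp (ζ i)) (ζ j) with hcdef
  set b : Fin d → ℝ := fun j => dotp z (ζ j) - γ j with hbdef
  have hkey : ∀ j (x : ℝ),
      onGrid ζ γ j (z + x • perp (ζ i)) ↔ ∃ m : ℤ, c j * x + b j = m := by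
    intro j x
    unfold onGrid
    have : dotp (z + x • perp (ζ i)) (ζ j) - γ j = c j * x + b j := by
      rw [dotp_add_smul]; simp only [hcdef, hbdef]; ring
    rw [this]
  have hne : ∀ j, j ≠ i → c j ≠ 0 := fun j hj => abs_pos.mp (hpos j hj)
  set S : Fin d → ℝ → Set ℝ :=
    fun j α => {x : ℝ | x ∈ Icc 0 α ∧ ∃ m : ℤ, c j * x + b j = m} with hSdef
  have hset : ∀ α : ℝ, {x : ℝ | x ∈ Icc 0 α ∧
      ∃ j, j ≠ i ∧ onGrid ζ γ j (z + x • perp (ζ i))}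
      = ⋃ j ∈ Finset.univ.erase i, S j α := by
    intro α
    ext x
    simp only [mem_setOf_eq, Set.mem_iUnion, Finset.mem_erase, Finset.mem_univ, and_true,
      hSdef, hkey, exists_prop]
    tauto
  have hdisj : ∀ (α : ℝ), ∀ j ∈ Finset.univ.erase i, ∀ k ∈ Finset.univ.erase i,
      j ≠ k → Disjoint (S j α) (S k α) := by
    intro α j hj k hk hjk
    rw [Finset.mem_erase] at hj hk
    rw [Set.disjoint_left]
    rintro x ⟨hx1, hxj⟩ ⟨_, hxk⟩
    have hgj : onGrid ζ γ j (z + x • perp (ζ i)) := (hkey j x).mpr hxj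
    have hgk : onGrid ζ γ k (z + x • perp (ζ i)) := (hkey k x).mpr hxk
    have hgi : onGrid ζ γ i (z + x • perp (ζ i)) := by
      obtain ⟨m, hm⟩ := hz
      exact ⟨m, by rw [dotp_add_smul, perp_dotp_self]; simpa using hm⟩
    have hsub : ({i, j, k} : Set (Fin d)) ⊆ {l : Fin d | onGrid ζ γ l (z + x • perp (ζ i))} := by
      intro l hl
      rcases hl with rfl | rfl | rfl
      · exact hgi
      · exact hgj
      · exact hgk
    have h3 : ({i, j, k} : Set (Fin d)).ncard = 3 := by
      rw [Set.ncard_insert_of_notMem (by simp [Ne.symm hj.1, Ne.symm hk.1]),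
        Set.ncard_pair hjk]
    have hle := Set.ncard_le_ncard hsub (Set.toFinite _)
    rw [h3] at hle
    exact absurd (le_trans hle (hreg (z + x • perp (ζ i)))) (by norm_num)
  have hsum : Tendsto (fun α : ℝ => ∑ j ∈ Finset.univ.erase i, ((S j α).ncard : ℝ) / α)
      atTop (nhds (∑ j ∈ Finset.univ.erase i, |c j|)) := by
    refine tendsto_finset_sum _ fun j hj => ?_
    exact tendsto_count (c j) (b j) (hne j (Finset.mem_erase.mp hj).1)
  refine Tendsto.congr' ?_ hsum
  filter_upwards [eventually_ge_atTop (0 : ℝ)] with α hα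
  rw [← Finset.sum_div]
  congr 1
  rw [hset α, my_ncard_biUnion _ _
    (fun j hj => (count_ne (c j) (b j) α (hne j (Finset.mem_erase.mp hj).1) hα).1)
    (hdisj α)]
  push_cast
  rfl
end
end

section
/- In a regular multigrid, for any two vertices A and B lying on a common grid line ℓ, the path from A to B that follows ℓ through all intermediate intersection points is a shortest path in the multigrid graph; equivalently, the graph distance between A and B equals one plus the number of grid lines crossing ℓ strictly between A and B. -/
open Set

noncomputable section

/-- A multigrid vertex: an intersection point of two grid lines of distinct directions. -/
def IsVertex {d : ℕ} (ζ : Fin d → ℂ) (γ : Fin d → ℝ) (z : ℂ) : Prop :=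
  ∃ i j : Fin d, i ≠ j ∧ onGrid ζ γ i z ∧ onGrid ζ γ j z

/-- `a` and `b` lie on a common line of the grid of direction `i`. -/
def SameLine {d : ℕ} (ζ : Fin d → ℂ) (γ : Fin d → ℝ) (i : Fin d) (a b : ℂ) : Prop :=
  onGrid ζ γ i a ∧ onGrid ζ γ i b ∧ ∃ t : ℝ, b - a = t • perp (ζ i)

/-- `c` lies strictly between `a` and `b` on the segment `[a,b]`. -/
def StrictBetween (a b c : ℂ) : Prop :=
  ∃ t : ℝ, 0 < t ∧ t < 1 ∧ c = a + t • (b - a)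

/-- The multigrid graph: vertices are the intersection points of grid lines, and two
vertices are adjacent when they are consecutive intersection points along a grid line. -/
def multigridGraph {d : ℕ} (ζ : Fin d → ℂ) (γ : Fin d → ℝ) : SimpleGraph ℂ where
  Adj a b := a ≠ b ∧ IsVertex ζ γ a ∧ IsVertex ζ γ b ∧
    ∃ i : Fin d, SameLine ζ γ i a b ∧
      ∀ c : ℂ, IsVertex ζ γ c → ¬ StrictBetween a b c
  symm := by
    constructor
    rintro a b ⟨hab, ha, hb, i, ⟨hga, hgb, t, ht⟩, hno⟩
    refine ⟨hab.symm, hb, ha, i, ⟨hgb, hga, -t, by rw [neg_smul, ← ht]; ring⟩, ?_⟩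
    rintro c hc ⟨s, hs0, hs1, hcs⟩
    exact hno c hc ⟨1 - s, by linarith, by linarith, by rw [hcs]; module⟩
  loopless := by constructor; rintro a ⟨h, _⟩; exact h rfl

namespace MGProof

lemma dotp_coords (z w : ℂ) : dotp z w = z.re * w.re + z.im * w.im := by
  simp [dotp, Complex.mul_re, Complex.conj_re, Complex.conj_im]

lemma dotp_sub (z w v : ℂ) : dotp (z - w) v = dotp z v - dotp w v := by
  simp [dotp_coords, Complex.sub_re, Complex.sub_im]; ring

lemma dotp_smul (w v : ℂ) (r : ℝ) : dotp (r • w) v = r * dotp w v := by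
  simp [dotp_coords, Complex.smul_re, Complex.smul_im, smul_eq_mul]; ring

lemma dotp_add_smul (z w v : ℂ) (r : ℝ) :
    dotp (z + r • w) v = dotp z v + r * dotp w v := by
  simp [dotp_coords, Complex.add_re, Complex.add_im, Complex.smul_re, Complex.smul_im,
    smul_eq_mul]; ring

lemma dotp_perp_self (z : ℂ) : dotp (perp z) z = 0 := by
  simp [perp, dotp_coords, Complex.mul_re, Complex.mul_im, Complex.I_re, Complex.I_im]; ring

lemma exists_real_smul (z w : ℂ) (h1 : ‖z‖ = 1) (h0 : dotp (perp z) w = 0) :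
    ∃ t : ℝ, w = t • z := by
  have hz : z.re * z.re + z.im * z.im = 1 := by
    have h := Complex.sq_norm z
    rw [h1] at h
    simpa [Complex.normSq_apply] using h.symm
  have h0' : z.re * w.im - z.im * w.re = 0 := by
    have h := h0
    simp only [perp, dotp_coords, Complex.mul_re, Complex.mul_im, Complex.I_re,
      Complex.I_im] at h
    linarith
  refine ⟨w.re * z.re + w.im * z.im, ?_⟩
  apply Complex.ext
  · simp only [Complex.smul_re, smul_eq_mul]
    linear_combination (-w.re) * hz - z.im * h0'
  · simp only [Complex.smul_im, smul_eq_mul]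
    linear_combination (-w.im) * hz + z.re * h0'

def lf {d : ℕ} (ζ : Fin d → ℂ) (γ : Fin d → ℝ) (j : Fin d) (z : ℂ) : ℝ :=
  dotp z (ζ j) - γ j

lemma lf_add_smul {d : ℕ} (ζ : Fin d → ℂ) (γ : Fin d → ℝ) (j : Fin d) (z w : ℂ) (r : ℝ) :
    lf ζ γ j (z + r • w) = lf ζ γ j z + r * dotp w (ζ j) := by
  unfold lf; rw [dotp_add_smul]; ring

lemma lf_sub {d : ℕ} (ζ : Fin d → ℂ) (γ : Fin d → ℝ) (j : Fin d) (z w : ℂ) :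
    lf ζ γ j z - lf ζ γ j w = dotp (z - w) (ζ j) := by
  simp [lf, dotp_sub]

lemma three_grids {d : ℕ} {ζ : Fin d → ℂ} {γ : Fin d → ℝ} (hreg : Regular ζ γ) {z : ℂ}
    {a b c : Fin d} (hab : a ≠ b) (hac : a ≠ c) (hbc : b ≠ c)
    (ha : onGrid ζ γ a z) (hb : onGrid ζ γ b z) (hc : onGrid ζ γ c z) : False := by
  have hsub : ({a, b, c} : Set (Fin d)) ⊆ {i | onGrid ζ γ i z} := by
    rintro x (rfl | rfl | rfl) <;> assumption
  have h3 : ({a, b, c} : Set (Fin d)).ncard = 3 := by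
    rw [Set.ncard_insert_of_notMem (by simp [hab, hac]), Set.ncard_pair hbc]
  have hle := Set.ncard_le_ncard hsub (Set.toFinite _)
  have := hreg z
  omega

lemma second_dir {d : ℕ} {ζ : Fin d → ℂ} {γ : Fin d → ℝ} (hreg : Regular ζ γ)
    {i : Fin d} {z : ℂ} (hi : onGrid ζ γ i z) (hv : IsVertex ζ γ z) :
    ∃ j, j ≠ i ∧ onGrid ζ γ j z := by
  obtain ⟨a, b, hab, ha, hb⟩ := hv
  by_cases hai : a = i
  · subst hai; exact ⟨b, Ne.symm hab, hb⟩
  · by_cases hbi : b = i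
    · subst hbi; exact ⟨a, hab, ha⟩
    · exact (three_grids hreg hab hai hbi ha hb hi).elim

lemma param_inj {A B : ℂ} (hBA : B - A ≠ 0) {r r' : ℝ}
    (h : A + r • (B - A) = A + r' • (B - A)) : r = r' := by
  have h2 : (r - r') • (B - A) = 0 := by
    rw [sub_smul]
    have h3 := add_left_cancel h
    rw [h3]; ring
  rcases smul_eq_zero.1 h2 with h3 | h3
  · linarith [sub_eq_zero.1 (by exact_mod_cast h3)]
  · exact absurd h3 hBA

lemma dotp_BA {d : ℕ} {ζ : Fin d → ℂ} {γ : Fin d → ℝ} {i : Fin d} {A B : ℂ}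
    (hunit : ∀ j, ‖ζ j‖ = 1)
    (hnonpar : ∀ j k : Fin d, j ≠ k → ∀ t : ℝ, ζ k ≠ t • ζ j)
    (hAB : A ≠ B) (hline : SameLine ζ γ i A B) :
    dotp (B - A) (ζ i) = 0 ∧ ∀ j, j ≠ i → dotp (B - A) (ζ j) ≠ 0 := by
  obtain ⟨-, -, T, hT⟩ := hline
  have hT0 : T ≠ 0 := by
    rintro rfl
    rw [zero_smul] at hT
    exact hAB (sub_eq_zero.1 hT).symm
  constructor
  · rw [hT, dotp_smul, dotp_perp_self, mul_zero]
  · intro j hj hcon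
    rw [hT, dotp_smul] at hcon
    have hperp : dotp (perp (ζ i)) (ζ j) = 0 := by
      rcases mul_eq_zero.1 hcon with h | h
      · exact absurd h hT0
      · exact h
    obtain ⟨t, ht⟩ := exists_real_smul (ζ i) (ζ j) (hunit i) hperp
    exact hnonpar i j (Ne.symm hj) t ht

lemma adj_iff {d : ℕ} {ζ : Fin d → ℂ} {γ : Fin d → ℝ} {a b : ℂ} :
    (multigridGraph ζ γ).Adj a b ↔ (a ≠ b ∧ IsVertex ζ γ a ∧ IsVertex ζ γ b ∧
      ∃ i : Fin d, SameLine ζ γ i a b ∧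
        ∀ c : ℂ, IsVertex ζ γ c → ¬ StrictBetween a b c) := Iff.rfl

lemma mid {a b m : ℝ} (h : a < m ∧ m < b ∨ b < m ∧ m < a) :
    0 < (m - a) / (b - a) ∧ (m - a) / (b - a) < 1 ∧ a + (m - a) / (b - a) * (b - a) = m := by
  have hba : b - a ≠ 0 := by
    rcases h with ⟨h1, h2⟩ | ⟨h1, h2⟩ <;> intro hc <;> nlinarith
  refine ⟨?_, ?_, by field_simp; ring⟩
  · rcases h with ⟨h1, h2⟩ | ⟨h1, h2⟩
    · exact div_pos (by linarith) (by linarith)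
    · exact div_pos_of_neg_of_neg (by linarith) (by linarith)
  · rcases h with ⟨h1, h2⟩ | ⟨h1, h2⟩
    · exact (div_lt_one (by linarith)).2 (by linarith)
    · rw [show (m - a) / (b - a) = (a - m) / (a - b) by
        rw [← neg_div_neg_eq]; ring_nf]
      exact (div_lt_one (by linarith)).2 (by linarith)

lemma cross {d : ℕ} {ζ : Fin d → ℂ} {γ : Fin d → ℝ} {A B : ℂ}
    (p : (multigridGraph ζ γ).Walk A B) (j : Fin d) (m : ℤ) (ε : ℝ)
    (hε : ε = 1 ∨ ε = -1)
    (hA : ε * lf ζ γ j A < ε * m) (hB : ε * (m : ℝ) < ε * lf ζ γ j B) :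
    ∃ t : ℕ, t + 1 < p.length ∧ lf ζ γ j (p.getVert t) ≠ (m : ℝ) ∧
      lf ζ γ j (p.getVert (t + 1)) = (m : ℝ) := by
  classical
  have hL1 : 0 < p.length := by
    rcases Nat.eq_zero_or_pos p.length with h | h
    · have hAB := SimpleGraph.Walk.eq_of_length_eq_zero (p := p) h
      rw [hAB] at hA; linarith
    · exact h
  set P : ℕ → Prop := fun t => t < p.length ∧ ε * lf ζ γ j (p.getVert t) < ε * m with hP
  have hP0 : P 0 := ⟨hL1, by rw [p.getVert_zero]; exact hA⟩
  set t := Nat.findGreatest P p.length with ht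
  have hPt : P t := Nat.findGreatest_spec (Nat.zero_le _) hP0
  obtain ⟨htL, hv0lt⟩ := hPt
  have hnext : ε * (m : ℝ) ≤ ε * lf ζ γ j (p.getVert (t + 1)) := by
    rcases eq_or_lt_of_le (Nat.succ_le_of_lt htL) with h | h
    · rw [show t + 1 = p.length from h, p.getVert_length]; exact hB.le
    · have hnP : ¬ P (t + 1) :=
        Nat.findGreatest_is_greatest (P := P) (n := p.length) (k := t + 1)
          (by rw [← ht]; omega) (by omega)
      simp only [hP] at hnP
      push_neg at hnP
      exact hnP h
  have hadj := p.adj_getVert_succ htL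
  rw [adj_iff] at hadj
  obtain ⟨hne, hv0v, hv1v, k, ⟨hg0, hg1, s, hs⟩, hnb⟩ := hadj
  have hv0ne : lf ζ γ j (p.getVert t) ≠ (m : ℝ) := by
    rcases hε with rfl | rfl <;> intro h <;> rw [h] at hv0lt <;> linarith
  have hεside : (lf ζ γ j (p.getVert t) < m ∧ (m : ℝ) ≤ lf ζ γ j (p.getVert (t + 1))) ∨
      (lf ζ γ j (p.getVert (t + 1)) ≤ m ∧ (m : ℝ) < lf ζ γ j (p.getVert t)) := by
    rcases hε with rfl | rfl
    · left; constructor <;> linarith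
    · right; constructor <;> linarith
  have hkey : lf ζ γ j (p.getVert (t + 1)) = (m : ℝ) := by
    by_contra hcon
    have hstrict : (lf ζ γ j (p.getVert t) < m ∧ (m : ℝ) < lf ζ γ j (p.getVert (t + 1))) ∨
        (lf ζ γ j (p.getVert (t + 1)) < m ∧ (m : ℝ) < lf ζ γ j (p.getVert t)) := by
      rcases hεside with ⟨h1, h2⟩ | ⟨h1, h2⟩
      · exact Or.inl ⟨h1, lt_of_le_of_ne h2 (Ne.symm hcon)⟩
      · exact Or.inr ⟨lt_of_le_of_ne h1 hcon, h2⟩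
    obtain ⟨hr0, hr1, hrm⟩ := mid hstrict
    set rr := ((m : ℝ) - lf ζ γ j (p.getVert t)) /
      (lf ζ γ j (p.getVert (t + 1)) - lf ζ γ j (p.getVert t)) with hrr
    set c' := p.getVert t + rr • (p.getVert (t + 1) - p.getVert t) with hc'
    have hgj : onGrid ζ γ j c' := by
      refine ⟨m, ?_⟩
      show lf ζ γ j c' = (m : ℝ)
      rw [hc', lf_add_smul, ← lf_sub ζ γ j (p.getVert (t + 1)) (p.getVert t)]
      exact hrm
    have hjk : j ≠ k := by
      rintro rfl
      have heq0 : lf ζ γ j (p.getVert (t + 1)) = lf ζ γ j (p.getVert t) := by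
        have h2 : p.getVert (t + 1) = p.getVert t + s • perp (ζ j) := by rw [← hs]; ring
        rw [h2, lf_add_smul, dotp_perp_self, mul_zero, add_zero]
      rcases hstrict with ⟨h1, h2⟩ | ⟨h1, h2⟩ <;> linarith
    have hgk : onGrid ζ γ k c' := by
      obtain ⟨mk, hmk⟩ := hg0
      refine ⟨mk, ?_⟩
      show lf ζ γ k c' = (mk : ℝ)
      rw [hc', hs, smul_smul, lf_add_smul, dotp_perp_self, mul_zero, add_zero]
      exact hmk
    exact hnb c' ⟨j, k, hjk, hgj, hgk⟩ ⟨rr, hr0, hr1, hc'⟩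
  refine ⟨t, ?_, hv0ne, hkey⟩
  rcases eq_or_lt_of_le (Nat.succ_le_of_lt htL) with h | h
  · exfalso
    rw [show t + 1 = p.length from h, p.getVert_length] at hkey
    rw [hkey] at hB
    linarith
  · exact h

lemma finite_between {d : ℕ} {ζ : Fin d → ℂ} {γ : Fin d → ℝ} {i : Fin d} {A B : ℂ}
    (hunit : ∀ j, ‖ζ j‖ = 1)
    (hnonpar : ∀ j k : Fin d, j ≠ k → ∀ t : ℝ, ζ k ≠ t • ζ j)
    (hreg : Regular ζ γ) (hAB : A ≠ B) (hline : SameLine ζ γ i A B) :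
    {c : ℂ | IsVertex ζ γ c ∧ StrictBetween A B c}.Finite := by
  obtain ⟨h0, hj⟩ := dotp_BA hunit hnonpar hAB hline
  apply Set.Finite.subset (s := ⋃ j : Fin d,
    (fun m : ℤ => A + (((m : ℝ) - lf ζ γ j A) / dotp (B - A) (ζ j)) • (B - A)) ''
      (Set.Icc ⌈min (lf ζ γ j A) (lf ζ γ j B)⌉ ⌊max (lf ζ γ j A) (lf ζ γ j B)⌋))
  · exact Set.finite_iUnion fun j => (Set.finite_Icc _ _).image _
  · rintro c ⟨hv, r, hr0, hr1, rfl⟩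
    have hgi : onGrid ζ γ i (A + r • (B - A)) := by
      obtain ⟨mA, hmA⟩ := hline.1
      refine ⟨mA, ?_⟩
      show lf ζ γ i (A + r • (B - A)) = (mA : ℝ)
      rw [lf_add_smul, h0, mul_zero, add_zero]
      exact hmA
    obtain ⟨j, hji, mj, hmj⟩ := second_dir hreg hgi hv
    have hmj' : lf ζ γ j (A + r • (B - A)) = (mj : ℝ) := hmj
    have hD := hj j hji
    have heq : (mj : ℝ) = lf ζ γ j A + r * dotp (B - A) (ζ j) := by
      rw [← lf_add_smul]; exact hmj'.symm
    have hba : lf ζ γ j B = lf ζ γ j A + dotp (B - A) (ζ j) := by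
      have h := lf_sub ζ γ j B A; linarith
    refine Set.mem_iUnion.2 ⟨j, ⟨mj, ?_, ?_⟩⟩
    · simp only [Set.mem_Icc]
      constructor
      · rw [Int.ceil_le]
        rcases le_total (lf ζ γ j A) (lf ζ γ j B) with h | h
        · rw [min_eq_left h]; nlinarith
        · rw [min_eq_right h]; nlinarith
      · rw [Int.le_floor]
        rcases le_total (lf ζ γ j A) (lf ζ γ j B) with h | h
        · rw [max_eq_right h]; nlinarith
        · rw [max_eq_left h]; nlinarith
    · have hr : ((mj : ℝ) - lf ζ γ j A) / dotp (B - A) (ζ j) = r := by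
        field_simp
        linarith
      simp only [hr]

lemma length_lower {d : ℕ} {ζ : Fin d → ℂ} {γ : Fin d → ℝ} {i : Fin d} {A B : ℂ}
    (hunit : ∀ j, ‖ζ j‖ = 1)
    (hnonpar : ∀ j k : Fin d, j ≠ k → ∀ t : ℝ, ζ k ≠ t • ζ j)
    (hreg : Regular ζ γ) (hAB : A ≠ B) (hline : SameLine ζ γ i A B)
    (p : (multigridGraph ζ γ).Walk A B) :
    {c : ℂ | IsVertex ζ γ c ∧ StrictBetween A B c}.ncard + 1 ≤ p.length := by
  classical
  obtain ⟨h0, hjne⟩ := dotp_BA hunit hnonpar hAB hline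
  have hL1 : 1 ≤ p.length := by
    rcases Nat.eq_zero_or_pos p.length with h | h
    · exact absurd (SimpleGraph.Walk.eq_of_length_eq_zero (p := p) h) hAB
    · exact h
  have key : ∀ c ∈ {c : ℂ | IsVertex ζ γ c ∧ StrictBetween A B c}, ∃ t : ℕ,
      t + 1 < p.length ∧ ∃ j : Fin d, j ≠ i ∧ ∃ m : ℤ,
      lf ζ γ j c = (m : ℝ) ∧ lf ζ γ j (p.getVert t) ≠ (m : ℝ) ∧
      lf ζ γ j (p.getVert (t + 1)) = (m : ℝ) := by
    rintro c ⟨hv, r, hr0, hr1, rfl⟩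
    have hgi : onGrid ζ γ i (A + r • (B - A)) := by
      obtain ⟨mA, hmA⟩ := hline.1
      refine ⟨mA, ?_⟩
      show lf ζ γ i (A + r • (B - A)) = (mA : ℝ)
      rw [lf_add_smul, h0, mul_zero, add_zero]
      exact hmA
    obtain ⟨j, hji, mj, hmj⟩ := second_dir hreg hgi hv
    have hmj' : lf ζ γ j (A + r • (B - A)) = (mj : ℝ) := hmj
    have heq : (mj : ℝ) = lf ζ γ j A + r * dotp (B - A) (ζ j) := by
      rw [← lf_add_smul]; exact hmj'.symm
    have hba : lf ζ γ j B = lf ζ γ j A + dotp (B - A) (ζ j) := by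
      have h := lf_sub ζ γ j B A; linarith
    have hD := hjne j hji
    rcases lt_or_gt_of_ne hD with hDneg | hDpos
    · obtain ⟨t, h1, h2, h3⟩ := cross p j mj (-1) (Or.inr rfl)
        (by nlinarith) (by nlinarith)
      exact ⟨t, h1, j, hji, mj, hmj', h2, h3⟩
    · obtain ⟨t, h1, h2, h3⟩ := cross p j mj 1 (Or.inl rfl)
        (by nlinarith) (by nlinarith)
      exact ⟨t, h1, j, hji, mj, hmj', h2, h3⟩
  let f : ℂ → ℕ := fun c =>
    if hc : c ∈ {c : ℂ | IsVertex ζ γ c ∧ StrictBetween A B c} then (key c hc).choose else 0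
  have hfspec : ∀ c (hc : c ∈ {c : ℂ | IsVertex ζ γ c ∧ StrictBetween A B c}),
      (f c) + 1 < p.length ∧ ∃ j : Fin d, j ≠ i ∧ ∃ m : ℤ,
      lf ζ γ j c = (m : ℝ) ∧ lf ζ γ j (p.getVert (f c)) ≠ (m : ℝ) ∧
      lf ζ γ j (p.getVert (f c + 1)) = (m : ℝ) := by
    intro c hc
    simp only [f, dif_pos hc]
    exact (key c hc).choose_spec
  have hmaps : ∀ c ∈ {c : ℂ | IsVertex ζ γ c ∧ StrictBetween A B c},
      f c ∈ (↑(Finset.range (p.length - 1)) : Set ℕ) := by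
    intro c hc
    have h := (hfspec c hc).1
    simp only [Finset.coe_range, Set.mem_Iio]
    omega
  have hinj : Set.InjOn f {c : ℂ | IsVertex ζ γ c ∧ StrictBetween A B c} := by
    intro c hc c' hc' hf
    obtain ⟨ht1, j, hji, m, hcm, hne0, heq1⟩ := hfspec c hc
    obtain ⟨ht1', j', hji', m', hcm', hne0', heq1'⟩ := hfspec c' hc'
    rw [← hf] at ht1' hne0' heq1'
    have hadj := p.adj_getVert_succ (by omega : f c < p.length)
    rw [adj_iff] at hadj
    obtain ⟨hne, hv0, hv1, k, ⟨hg0, hg1, s, hs⟩, hnb⟩ := hadj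
    by_cases hjj : j = j'
    · subst hjj
      have hmm : (m : ℝ) = (m' : ℝ) := by rw [← heq1, heq1']
      obtain ⟨hvc, r, h01, h02, rfl⟩ := hc
      obtain ⟨hvc', r', h01', h02', rfl⟩ := hc'
      have e1 : lf ζ γ j A + r * dotp (B - A) (ζ j) = (m : ℝ) := by
        rw [← lf_add_smul]; exact hcm
      have e1' : lf ζ γ j A + r' * dotp (B - A) (ζ j) = (m' : ℝ) := by
        rw [← lf_add_smul]; exact hcm'
      have hD := hjne j hji
      have hrr : r = r' := by
        have h5 : r * dotp (B - A) (ζ j) = r' * dotp (B - A) (ζ j) := by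
          rw [hmm] at e1; linarith
        exact mul_right_cancel₀ hD h5
      rw [hrr]
    · exfalso
      have hkj : k ≠ j := by
        rintro rfl
        have heq0 : lf ζ γ k (p.getVert (f c + 1)) = lf ζ γ k (p.getVert (f c)) := by
          have h2 : p.getVert (f c + 1) = p.getVert (f c) + s • perp (ζ k) := by
            rw [← hs]; ring
          rw [h2, lf_add_smul, dotp_perp_self, mul_zero, add_zero]
        rw [heq1] at heq0
        exact hne0 heq0.symm
      have hkj' : k ≠ j' := by
        rintro rfl
        have heq0 : lf ζ γ k (p.getVert (f c + 1)) = lf ζ γ k (p.getVert (f c)) := by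
          have h2 : p.getVert (f c + 1) = p.getVert (f c) + s • perp (ζ k) := by
            rw [← hs]; ring
          rw [h2, lf_add_smul, dotp_perp_self, mul_zero, add_zero]
        rw [heq1'] at heq0
        exact hne0' heq0.symm
      exact three_grids hreg hjj (Ne.symm hkj) (Ne.symm hkj')
        ⟨m, heq1⟩ ⟨m', heq1'⟩ hg1
  have hcard := Set.ncard_le_ncard_of_injOn f hmaps hinj
    ((Finset.range (p.length - 1)).finite_toSet)
  rw [Set.ncard_coe_finset, Finset.card_range] at hcard
  omega

lemma walk_upper {d : ℕ} {ζ : Fin d → ℂ} {γ : Fin d → ℝ}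
    (hunit : ∀ j, ‖ζ j‖ = 1)
    (hnonpar : ∀ j k : Fin d, j ≠ k → ∀ t : ℝ, ζ k ≠ t • ζ j)
    (hreg : Regular ζ γ) (i : Fin d) :
    ∀ n : ℕ, ∀ A B : ℂ, IsVertex ζ γ A → IsVertex ζ γ B → A ≠ B → SameLine ζ γ i A B →
      {c : ℂ | IsVertex ζ γ c ∧ StrictBetween A B c}.ncard = n →
      ∃ p : (multigridGraph ζ γ).Walk A B, p.length = n + 1 := by
  intro n
  induction n with
  | zero =>
    intro A B hA hB hAB hline hn
    have hfin := finite_between hunit hnonpar hreg hAB hline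
    have hempty : {c : ℂ | IsVertex ζ γ c ∧ StrictBetween A B c} = ∅ :=
      (Set.ncard_eq_zero hfin).1 hn
    have hadj : (multigridGraph ζ γ).Adj A B := by
      rw [adj_iff]
      refine ⟨hAB, hA, hB, i, hline, ?_⟩
      intro c h1 h2
      have hmem : c ∈ {c : ℂ | IsVertex ζ γ c ∧ StrictBetween A B c} := ⟨h1, h2⟩
      rw [hempty] at hmem
      exact hmem
    exact ⟨SimpleGraph.Walk.cons hadj SimpleGraph.Walk.nil, by simp⟩
  | succ n ih =>
    intro A B hA hB hAB hline hn
    have hfin := finite_between hunit hnonpar hreg hAB hline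
    have hBA0 : B - A ≠ 0 := sub_ne_zero.2 (Ne.symm hAB)
    set R : Set ℝ :=
      {r | 0 < r ∧ r < 1 ∧ (A + r • (B - A)) ∈
        {c : ℂ | IsVertex ζ γ c ∧ StrictBetween A B c}} with hR
    have hRfin : R.Finite := by
      apply Set.Finite.of_finite_image (f := fun r => A + r • (B - A))
      · apply hfin.subset
        rintro x ⟨r, ⟨h1, h2, h3⟩, rfl⟩
        exact h3
      · intro r hr r' hr' h
        exact param_inj hBA0 h
    have hRne : R.Nonempty := by
      have hSne : {c : ℂ | IsVertex ζ γ c ∧ StrictBetween A B c}.Nonempty :=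
        Set.nonempty_of_ncard_ne_zero (by omega)
      obtain ⟨c, hv, r, h01, h02, rfl⟩ := hSne
      exact ⟨r, h01, h02, ⟨hv, r, h01, h02, rfl⟩⟩
    obtain ⟨r₀, hr₀R, hr₀min⟩ := Set.exists_min_image R id hRfin hRne
    obtain ⟨h00, h01, hc₀S⟩ := hr₀R
    have hc₀v : IsVertex ζ γ (A + r₀ • (B - A)) := hc₀S.1
    have hAc₀ : A ≠ A + r₀ • (B - A) := by
      intro h
      have h2 : A + (0 : ℝ) • (B - A) = A + r₀ • (B - A) := by
        rw [zero_smul, add_zero]; exact h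
      have := param_inj hBA0 h2
      linarith
    have hc₀B : A + r₀ • (B - A) ≠ B := by
      intro h
      have h2 : A + r₀ • (B - A) = A + (1 : ℝ) • (B - A) := by
        rw [one_smul]; rw [h]; ring
      have := param_inj hBA0 h2
      linarith
    obtain ⟨hgA, hgB, T, hT⟩ := hline
    have hgc₀ : onGrid ζ γ i (A + r₀ • (B - A)) := by
      obtain ⟨mA, hmA⟩ := hgA
      refine ⟨mA, ?_⟩
      show lf ζ γ i (A + r₀ • (B - A)) = (mA : ℝ)
      rw [lf_add_smul, hT, dotp_smul, dotp_perp_self, mul_zero, mul_zero, add_zero]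
      exact hmA
    have hlineAc₀ : SameLine ζ γ i A (A + r₀ • (B - A)) := by
      refine ⟨hgA, hgc₀, r₀ * T, ?_⟩
      rw [← smul_smul, ← hT]
      module
    have hlinec₀B : SameLine ζ γ i (A + r₀ • (B - A)) B := by
      refine ⟨hgc₀, hgB, (1 - r₀) * T, ?_⟩
      rw [← smul_smul, ← hT]
      module
    have hAdjAc₀ : (multigridGraph ζ γ).Adj A (A + r₀ • (B - A)) := by
      rw [adj_iff]
      refine ⟨hAc₀, hA, hc₀v, i, hlineAc₀, ?_⟩
      rintro c hv ⟨s, hs0, hs1, rfl⟩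
      have hform : A + s • (A + r₀ • (B - A) - A) = A + (s * r₀) • (B - A) := by
        module
      rw [hform] at hv
      have hmem : (s * r₀) ∈ R := by
        refine ⟨by positivity, by nlinarith, hv, s * r₀, by positivity, by nlinarith, rfl⟩
      have := hr₀min _ hmem
      simp only [id] at this
      nlinarith
    have hSeq : {c : ℂ | IsVertex ζ γ c ∧ StrictBetween (A + r₀ • (B - A)) B c} =
        {c : ℂ | IsVertex ζ γ c ∧ StrictBetween A B c} \ {A + r₀ • (B - A)} := by
      ext c
      constructor
      · rintro ⟨hv, s, hs0, hs1, rfl⟩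
        have hform : A + r₀ • (B - A) + s • (B - (A + r₀ • (B - A))) =
            A + (r₀ + s * (1 - r₀)) • (B - A) := by
          module
        constructor
        · exact ⟨hv, r₀ + s * (1 - r₀), by nlinarith, by nlinarith, hform⟩
        · simp only [Set.mem_singleton_iff]
          intro h
          rw [hform] at h
          have h2 : A + (r₀ + s * (1 - r₀)) • (B - A) = A + r₀ • (B - A) := h
          have := param_inj hBA0 h2
          nlinarith
      · rintro ⟨⟨hv, r, h0, h1, rfl⟩, hne⟩
        have hrR : r ∈ R := ⟨h0, h1, hv, r, h0, h1, rfl⟩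
        have hler := hr₀min _ hrR
        simp only [id] at hler
        have hrne : r ≠ r₀ := by
          intro h
          subst h
          exact hne rfl
        have hrgt : r₀ < r := lt_of_le_of_ne hler (Ne.symm hrne)
        refine ⟨hv, (r - r₀) / (1 - r₀), div_pos (by linarith) (by linarith),
          (div_lt_one (by linarith)).2 (by linarith), ?_⟩
        have hB' : B - (A + r₀ • (B - A)) = (1 - r₀) • (B - A) := by module
        rw [hB', smul_smul, div_mul_cancel₀ _ (by linarith : (1 : ℝ) - r₀ ≠ 0)]
        module
    have hcard' : {c : ℂ | IsVertex ζ γ c ∧ StrictBetween (A + r₀ • (B - A)) B c}.ncard = n := by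
      rw [hSeq, Set.ncard_diff_singleton_of_mem hc₀S, hn]
      omega
    obtain ⟨p, hp⟩ := ih (A + r₀ • (B - A)) B hc₀v hB hc₀B hlinec₀B hcard'
    exact ⟨SimpleGraph.Walk.cons hAdjAc₀ p, by simp [hp]⟩

end MGProof

/-- In a regular multigrid, for two vertices `A ≠ B` on a common grid line, the straight
path along the line is a shortest path: the graph distance between `A` and `B` equals one
plus the number of intermediate vertices (equivalently, of crossing lines) strictly
between `A` and `B` on the line. -/
theorem multigrid_distance_on_line {d : ℕ} (ζ : Fin d → ℂ) (γ : Fin d → ℝ)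
    (hunit : ∀ j, ‖ζ j‖ = 1)
    (hnonpar : ∀ j k : Fin d, j ≠ k → ∀ t : ℝ, ζ k ≠ t • ζ j)
    (hreg : Regular ζ γ)
    (A B : ℂ) (i : Fin d)
    (hA : IsVertex ζ γ A) (hB : IsVertex ζ γ B) (hAB : A ≠ B)
    (hline : SameLine ζ γ i A B) :
    (multigridGraph ζ γ).dist A B
      = 1 + Set.ncard {c : ℂ | IsVertex ζ γ c ∧ StrictBetween A B c} := by
  obtain ⟨p, hp⟩ := MGProof.walk_upper hunit hnonpar hreg i
    ({c : ℂ | IsVertex ζ γ c ∧ StrictBetween A B c}.ncard) A B hA hB hAB hline rfl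
  have hub : (multigridGraph ζ γ).dist A B ≤
      {c : ℂ | IsVertex ζ γ c ∧ StrictBetween A B c}.ncard + 1 := by
    rw [← hp]
    exact SimpleGraph.dist_le p
  have hreach : (multigridGraph ζ γ).Reachable A B := ⟨p⟩
  obtain ⟨q, hq⟩ := hreach.exists_walk_length_eq_dist
  have hlb := MGProof.length_lower hunit hnonpar hreg hAB hline q
  rw [hq] at hlb
  omega
end
end

section
/- Let T be an edge-to-edge tiling and Δ a polygon. If for every single tile t ∈ T the rescaled corona sequence ⌢{t}_n / n converges to Δ in Hausdorff distance, then for every finite patch P of T the rescaled corona sequence ⌢P_n / n also converges to Δ; i.e., Δ is the uniform corona limit of T. -/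
open Filter Metric

noncomputable section

/-- The corona sequence of a set of tiles `P` for the adjacency relation `adj`:
`P₀ = P` and `P_{n+1} = Pₙ ∪ {t : t adjacent to some tile of Pₙ}`. -/
def coronaSeq {ι : Type*} (adj : ι → ι → Prop) (P : Set ι) : ℕ → Set ι
  | 0 => P
  | n + 1 => coronaSeq adj P n ∪ {t | ∃ t' ∈ coronaSeq adj P n, adj t t'}

/-- The region of the plane covered by the tiles of a patch. -/
def region {ι : Type*} (tile : ι → Set ℂ) (P : Set ι) : Set ℂ := ⋃ t ∈ P, tile t

/-- A patch's corona is the union of the single-tile coronas. -/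
lemma coronaSeq_eq_biUnion {ι : Type*} (adj : ι → ι → Prop) (P : Set ι) (n : ℕ) :
    coronaSeq adj P n = ⋃ t ∈ P, coronaSeq adj {t} n := by
  induction n with
  | zero => simp [coronaSeq]
  | succ n ih =>
    ext x
    simp only [coronaSeq, ih, Set.mem_union, Set.mem_iUnion, Set.mem_setOf_eq]
    constructor
    · rintro (⟨t, ht, hx⟩ | ⟨t', ⟨s, hs, hts⟩, hadj⟩)
      · exact ⟨t, ht, Or.inl hx⟩
      · exact ⟨s, hs, Or.inr ⟨t', hts, hadj⟩⟩
    · rintro ⟨t, ht, hx | ⟨t', ht', hadj⟩⟩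
      · exact Or.inl ⟨t, ht, hx⟩
      · exact Or.inr ⟨t', ⟨t, ht, ht'⟩, hadj⟩

lemma subset_coronaSeq {ι : Type*} (adj : ι → ι → Prop) (P : Set ι) (n : ℕ) :
    P ⊆ coronaSeq adj P n := by
  induction n with
  | zero => exact le_refl _
  | succ n ih => exact ih.trans Set.subset_union_left

lemma region_biUnion {ι : Type*} (tile : ι → Set ℂ) (P : Set ι) (S : ι → Set ι) :
    region tile (⋃ t ∈ P, S t) = ⋃ t ∈ P, region tile (S t) := by
  ext x
  simp only [region, Set.mem_iUnion]
  tauto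

/-- Finiteness transfer for Hausdorff edistance of a subset. -/
lemma hausdorffEdist_ne_top_of_subset {A U Δ : Set ℂ} (hA : A.Nonempty)
    (hΔ : IsCompact Δ) (hΔne : Δ.Nonempty) (hsub : A ⊆ U)
    (hU : EMetric.hausdorffEdist U Δ ≠ ⊤) : EMetric.hausdorffEdist A Δ ≠ ⊤ := by
  obtain ⟨a₀, ha₀⟩ := hA
  obtain ⟨c₀, hc₀⟩ := hΔne
  have hle : EMetric.hausdorffEdist A Δ ≤
      max (EMetric.hausdorffEdist U Δ) (EMetric.diam Δ + edist c₀ a₀) := by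
    apply EMetric.hausdorffEdist_le_of_infEdist
    · intro x hx
      exact le_max_of_le_left (EMetric.infEdist_le_hausdorffEdist_of_mem (hsub hx))
    · intro c hc
      refine le_max_of_le_right ?_
      calc EMetric.infEdist c A ≤ edist c a₀ := EMetric.infEdist_le_edist_of_mem ha₀
        _ ≤ edist c c₀ + edist c₀ a₀ := edist_triangle _ _ _
        _ ≤ EMetric.diam Δ + edist c₀ a₀ := by
            gcongr; exact EMetric.edist_le_diam_of_mem hc hc₀
  intro h
  rw [h, top_le_iff, max_eq_top] at hle
  rcases hle with h' | h'
  · exact hU h'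
  · exact (ENNReal.add_ne_top.2 ⟨hΔ.isBounded.ediam_ne_top, edist_ne_top _ _⟩) h'

/-- Hausdorff distance of a union against a fixed compact set. -/
lemma hausdorffDist_union_le {A B Δ : Set ℂ} (hA : A.Nonempty) (hB : B.Nonempty)
    (hΔ : IsCompact Δ) (hΔne : Δ.Nonempty) :
    hausdorffDist (A ∪ B) Δ ≤ max (hausdorffDist A Δ) (hausdorffDist B Δ) := by
  by_cases h : EMetric.hausdorffEdist (A ∪ B) Δ = ⊤
  · rw [hausdorffDist, show hausdorffEDist (A ∪ B) Δ = ⊤ from h]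
    simpa using le_max_of_le_left hausdorffDist_nonneg
  · have hA' := hausdorffEdist_ne_top_of_subset hA hΔ hΔne Set.subset_union_left h
    have hB' := hausdorffEdist_ne_top_of_subset hB hΔ hΔne Set.subset_union_right h
    have hle : EMetric.hausdorffEdist (A ∪ B) Δ ≤
        max (EMetric.hausdorffEdist A Δ) (EMetric.hausdorffEdist B Δ) := by
      apply EMetric.hausdorffEdist_le_of_infEdist
      · rintro x (hx | hx)
        · exact le_max_of_le_left (EMetric.infEdist_le_hausdorffEdist_of_mem hx)
        · exact le_max_of_le_right (EMetric.infEdist_le_hausdorffEdist_of_mem hx)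
      · intro c hc
        refine le_max_of_le_left ?_
        calc EMetric.infEdist c (A ∪ B) ≤ EMetric.infEdist c A :=
              EMetric.infEdist_anti Set.subset_union_left
          _ ≤ EMetric.hausdorffEdist Δ A := EMetric.infEdist_le_hausdorffEdist_of_mem hc
          _ = EMetric.hausdorffEdist A Δ := EMetric.hausdorffEdist_comm
    have hmax : (max (EMetric.hausdorffEdist A Δ) (EMetric.hausdorffEdist B Δ)).toReal
        = max (hausdorffDist A Δ) (hausdorffDist B Δ) := by
      rcases max_cases (EMetric.hausdorffEdist A Δ) (EMetric.hausdorffEdist B Δ) with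
        ⟨h1, h2⟩ | ⟨h1, h2⟩ <;> rw [h1]
      · exact (max_eq_left (ENNReal.toReal_mono hA' h2)).symm
      · exact (max_eq_right (ENNReal.toReal_mono hB' h2.le)).symm
    calc hausdorffDist (A ∪ B) Δ
        ≤ (max (EMetric.hausdorffEdist A Δ) (EMetric.hausdorffEdist B Δ)).toReal :=
          ENNReal.toReal_mono (by simp [hA', hB']) hle
      _ = _ := hmax

lemma hausdorffDist_biUnion_le {ι : Type*} (s : Finset ι) (hs : s.Nonempty)
    (F : ι → Set ℂ) (hF : ∀ i ∈ s, (F i).Nonempty) {Δ : Set ℂ}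
    (hΔ : IsCompact Δ) (hΔne : Δ.Nonempty) :
    hausdorffDist (⋃ i ∈ s, F i) Δ ≤ ∑ i ∈ s, hausdorffDist (F i) Δ := by
  induction hs using Finset.Nonempty.cons_induction with
  | singleton i => simp
  | cons a s ha hs ih =>
    have hFs : ∀ i ∈ s, (F i).Nonempty := fun i hi => hF i (Finset.mem_cons_of_mem hi)
    have hUne : (⋃ i ∈ s, F i).Nonempty := by
      obtain ⟨i, hi⟩ := hs
      obtain ⟨x, hx⟩ := hFs i hi
      exact ⟨x, Set.mem_biUnion hi hx⟩
    have hunion : (⋃ i ∈ Finset.cons a s ha, F i) = F a ∪ ⋃ i ∈ s, F i := by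
      simp [Finset.set_biUnion_insert]
    rw [hunion, Finset.sum_cons]
    have h1 := hausdorffDist_union_le (hF a (Finset.mem_cons_self a s)) hUne hΔ hΔne
    have h2 := ih hFs
    have hnn : (0:ℝ) ≤ ∑ i ∈ s, hausdorffDist (F i) Δ :=
      Finset.sum_nonneg fun _ _ => hausdorffDist_nonneg
    refine h1.trans (max_le ?_ ?_)
    · linarith
    · have := hausdorffDist_nonneg (s := F a) (t := Δ)
      linarith

/-- If for every single tile `t` the rescaled coronas `⌢{t}ₙ/n` converge to `Δ` in
Hausdorff distance, then for every nonempty finite patch `P` the rescaled coronas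
`⌢Pₙ/n` converge to `Δ` as well: `Δ` is the uniform corona limit of the tiling. -/
theorem uniform_corona_limit_of_single_tiles {ι : Type*}
    (adj : ι → ι → Prop) (hsymm : ∀ a b, adj a b → adj b a)
    (tile : ι → Set ℂ)
    (htile : ∀ t, IsCompact (tile t) ∧ (tile t).Nonempty)
    (Δ : Set ℂ) (hΔ : IsCompact Δ) (hΔne : Δ.Nonempty)
    (hsingle : ∀ t : ι,
      Tendsto (fun n : ℕ =>
          hausdorffDist ((fun z : ℂ => (n : ℂ)⁻¹ * z) '' region tile (coronaSeq adj {t} n)) Δ)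
        atTop (nhds 0)) :
    ∀ P : Set ι, P.Finite → P.Nonempty →
      Tendsto (fun n : ℕ =>
          hausdorffDist ((fun z : ℂ => (n : ℂ)⁻¹ * z) '' region tile (coronaSeq adj P n)) Δ)
        atTop (nhds 0) := by
  intro P hPfin hPne
  set s : Finset ι := hPfin.toFinset with hs
  have hsne : s.Nonempty := by simpa [hs] using hPne
  set F : ι → ℕ → Set ℂ :=
    fun t n => (fun z : ℂ => (n : ℂ)⁻¹ * z) '' region tile (coronaSeq adj {t} n) with hF
  have hFne : ∀ t n, (F t n).Nonempty := by
    intro t n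
    obtain ⟨x, hx⟩ := (htile t).2
    have : x ∈ region tile (coronaSeq adj {t} n) :=
      Set.mem_biUnion (subset_coronaSeq adj {t} n rfl) hx
    exact ⟨_, Set.mem_image_of_mem _ this⟩
  have key : ∀ n : ℕ,
      hausdorffDist ((fun z : ℂ => (n : ℂ)⁻¹ * z) '' region tile (coronaSeq adj P n)) Δ
        ≤ ∑ t ∈ s, hausdorffDist (F t n) Δ := by
    intro n
    have hsplit : (fun z : ℂ => (n : ℂ)⁻¹ * z) '' region tile (coronaSeq adj P n)
        = ⋃ t ∈ s, F t n := by
      rw [coronaSeq_eq_biUnion, region_biUnion, Set.image_iUnion]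
      simp only [Set.image_iUnion]
      ext x
      simp [hs, hF]
    rw [hsplit]
    exact hausdorffDist_biUnion_le s hsne _ (fun i _ => hFne i n) hΔ hΔne
  have hsum : Tendsto (fun n => ∑ t ∈ s, hausdorffDist (F t n) Δ) atTop (nhds 0) := by
    have := tendsto_finset_sum s (fun t _ => hsingle t)
    simpa using this
  exact squeeze_zero (fun n => hausdorffDist_nonneg) key hsum
end
end
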